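/- Let r ≥ 1 be an integer, let p be an odd prime, and let N be a positive integer with (−1)^r N ≡ 0 or 1 (mod 4). For a positive integer M with (−1)^r M ≡ 0,1 (mod 4), write (−1)^r M = D·v² with D the discriminant of ℚ(√((−1)^r M)) and v > 0, and set c(M) := L(1+r, χ_D) · T_{r+1}^{χ_D}(v) / v^{2r+1}. Then the weight −r+1/2 Hecke relation holds with eigenvalue 1 + p^{−2r−1}: c(p²N) + ((−1)^r N | p) · p^{−r−1} · c(N) + p^{−2r−1} · c(N/p²) = (1 + p^{−2r−1}) · c(N), where ((−1)^r N | p) is the Legendre symbol modulo p and c(N/p²) is taken to be 0 when p² does not divide N. -/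

import Mathlib

open scoped Real BigOperators
open ArithmeticFunction Finset

/-- `D` is a fundamental discriminant: either `D ≡ 1 (mod 4)` and squarefree, or
`D = 4m` with `m ≡ 2, 3 (mod 4)` squarefree. -/
def IsFundDisc (D : ℤ) : Prop :=
  (D % 4 = 1 ∧ Squarefree D) ∨
  (D % 4 = 0 ∧ Squarefree (D / 4) ∧ ((D / 4) % 4 = 2 ∨ (D / 4) % 4 = 3))

/-- The Kronecker symbol `(D/2)`. -/
def kronTwo (D : ℤ) : ℤ :=
  if 2 ∣ D then 0 else if D % 8 = 1 ∨ D % 8 = 7 then 1 else -1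

/-- The Kronecker symbol `(D/m)` for `m ≥ 1`; for a fundamental discriminant `D` this is
the character `χ_D`. -/
noncomputable def kronecker (D : ℤ) (m : ℕ) : ℤ :=
  kronTwo D ^ (padicValNat 2 m) * jacobiSym D (m / 2 ^ padicValNat 2 m)

/-- The Dirichlet series `L(s, χ_D) = Σ_{m ≥ 1} χ_D(m) m^(-s)` (convergent for
`Re(s) > 1`). -/
noncomputable def LKron (D : ℤ) (s : ℂ) : ℂ :=
  ∑' m : ℕ+, ((kronecker D (m : ℕ) : ℤ) : ℂ) * (((m : ℕ) : ℂ)) ^ (-s)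

/-- The divisor power sum `σ_w(u) = Σ_{d ∣ u} d^w` with complex exponent `w`. -/
noncomputable def sigmaC (w : ℂ) (u : ℕ) : ℂ := ∑ d ∈ u.divisors, ((d : ℂ)) ^ w

/-- `T_s^χ(v) = Σ_{a ∣ v} μ(a) χ(a) a^(s-1) σ_{2s-1}(v/a)`. -/
noncomputable def TT (χ : ℕ → ℂ) (s : ℂ) (v : ℕ) : ℂ :=
  ∑ a ∈ v.divisors,
    ((ArithmeticFunction.moebius a : ℤ) : ℂ) * χ a * ((a : ℂ)) ^ (s - 1) *
      sigmaC (2 * s - 1) (v / a)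

private lemma sqfree_neg {x : ℤ} (h : Squarefree x) : Squarefree (-x) :=
  fun y hy => h y ((dvd_neg).mp hy)

private lemma exists_fund_disc (n : ℤ) (hn : n ≠ 0) (h4 : n % 4 = 0 ∨ n % 4 = 1) :
    ∃ D : ℤ, ∃ v : ℕ, IsFundDisc D ∧ 0 < v ∧ n = D * (v : ℤ) ^ 2 := by
  obtain ⟨a, b, hab, ha⟩ := Nat.sq_mul_squarefree n.natAbs
  have hb0 : b ≠ 0 := by
    rintro rfl
    simp at hab
    omega
  -- signed squarefree part
  set A : ℤ := if 0 ≤ n then (a : ℤ) else -(a : ℤ) with hA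
  have hAsq : Squarefree A := by
    have h1 : Squarefree (a : ℤ) := Int.squarefree_natCast.mpr ha
    by_cases h : 0 ≤ n <;> simp [hA, h, h1, sqfree_neg h1]
  have hnA : n = A * (b : ℤ) ^ 2 := by
    have h2 : ((b : ℤ)) ^ 2 * (a : ℤ) = |n| := by
      have h2' : ((b : ℤ)) ^ 2 * (a : ℤ) = (n.natAbs : ℤ) := by exact_mod_cast hab
      rwa [← Int.abs_eq_natAbs] at h2'
    by_cases h : 0 ≤ n
    · rw [hA, if_pos h]
      rw [abs_of_nonneg h] at h2
      linarith
    · rw [hA, if_neg h]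
      rw [abs_of_neg (by omega)] at h2
      linarith
  have hA4 : A % 4 = 1 ∨ A % 4 = 2 ∨ A % 4 = 3 := by
    have h0 : A % 4 = 0 ∨ A % 4 = 1 ∨ A % 4 = 2 ∨ A % 4 = 3 := by omega
    rcases h0 with h0 | h0
    · exfalso
      have : (2 : ℤ) * 2 ∣ A := by omega
      have hu := hAsq 2 this
      rw [Int.isUnit_iff] at hu
      omega
    · exact h0
  rcases hA4 with h1 | h23
  · exact ⟨A, b, Or.inl ⟨h1, hAsq⟩, Nat.pos_of_ne_zero hb0, hnA⟩
  · -- b must be even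
    have hb2 : 2 ∣ b := by
      by_contra hb2
      have hbo : b % 2 = 1 := by omega
      obtain ⟨c, hc⟩ : ∃ c, b = 2 * c + 1 := ⟨b / 2, by omega⟩
      have hsq : ((b : ℤ)) ^ 2 = 4 * ((c : ℤ) * c + c) + 1 := by
        rw [hc]; push_cast; ring
      have hn2 : n = 4 * (A * ((c : ℤ) * c + c)) + A := by rw [hnA, hsq]; ring
      omega
    obtain ⟨b', hb'⟩ := hb2
    refine ⟨4 * A, b', Or.inr ⟨by omega, ?_, ?_⟩, ?_, ?_⟩
    · rwa [Int.mul_ediv_cancel_left _ (by norm_num)]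
    · rw [Int.mul_ediv_cancel_left _ (by norm_num)]; exact h23
    · omega
    · rw [hnA, hb']; push_cast; ring

private lemma kronecker_one (D : ℤ) : kronecker D 1 = 1 := by
  simp [kronecker]

private lemma kronecker_mul (D : ℤ) {m n : ℕ} (hm : m ≠ 0) (hn : n ≠ 0) :
    kronecker D (m * n) = kronecker D m * kronecker D n := by
  haveI : Fact (Nat.Prime 2) := ⟨Nat.prime_two⟩
  have h1 : (2:ℕ) ^ padicValNat 2 m ∣ m := pow_padicValNat_dvd
  have h2 : (2:ℕ) ^ padicValNat 2 n ∣ n := pow_padicValNat_dvd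
  have hm' : m / 2 ^ padicValNat 2 m ≠ 0 :=
    Nat.ne_of_gt (Nat.div_pos (Nat.le_of_dvd (Nat.pos_of_ne_zero hm) h1) (by positivity))
  have hn' : n / 2 ^ padicValNat 2 n ≠ 0 :=
    Nat.ne_of_gt (Nat.div_pos (Nat.le_of_dvd (Nat.pos_of_ne_zero hn) h2) (by positivity))
  haveI : NeZero (m / 2 ^ padicValNat 2 m) := ⟨hm'⟩
  haveI : NeZero (n / 2 ^ padicValNat 2 n) := ⟨hn'⟩
  unfold kronecker
  rw [padicValNat.mul hm hn]
  have hdiv : m * n / 2 ^ (padicValNat 2 m + padicValNat 2 n)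
      = (m / 2 ^ padicValNat 2 m) * (n / 2 ^ padicValNat 2 n) := by
    rw [pow_add]
    exact (Nat.div_mul_div_comm h1 h2).symm
  rw [hdiv, pow_add, jacobiSym.mul_right]
  ring

noncomputable def Gf (D : ℤ) (r : ℕ) : ArithmeticFunction ℂ :=
  ⟨fun a => ((moebius a : ℤ) : ℂ) * ((kronecker D a : ℤ) : ℂ) * (a : ℂ) ^ r, by simp⟩

noncomputable def Ff (r : ℕ) : ArithmeticFunction ℂ :=
  ⟨fun d => if d = 0 then 0 else (d : ℂ) ^ (2 * r + 1), by simp⟩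

noncomputable def Sf (r : ℕ) : ArithmeticFunction ℂ := ↑ArithmeticFunction.zeta * Ff r

lemma Sf_apply (r u : ℕ) : Sf r u = ∑ d ∈ u.divisors, (d : ℂ) ^ (2 * r + 1) := by
  rw [Sf, ArithmeticFunction.coe_zeta_mul_apply]
  refine Finset.sum_congr rfl fun d hd => ?_
  have : d ≠ 0 := (Nat.pos_of_mem_divisors hd).ne'
  simp [Ff, this]

noncomputable def Tf (D : ℤ) (r : ℕ) : ArithmeticFunction ℂ := Gf D r * Sf r

lemma Tf_apply (D : ℤ) (r v : ℕ) :
    Tf D r v = ∑ a ∈ v.divisors, Gf D r a * Sf r (v / a) := by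
  rw [Tf, ArithmeticFunction.mul_apply]
  exact Nat.sum_divisorsAntidiagonal (f := fun a b => Gf D r a * Sf r b)

lemma Gf_mult (D : ℤ) (r : ℕ) : (Gf D r).IsMultiplicative := by
  constructor
  · simp only [Gf, ArithmeticFunction.coe_mk]
    rw [ArithmeticFunction.moebius_apply_one, kronecker_one]
    simp
  · intro m n hmn
    rcases eq_or_ne m 0 with rfl | hm
    · simp [Gf]
    rcases eq_or_ne n 0 with rfl | hn
    · simp [Gf]
    simp only [Gf, ArithmeticFunction.coe_mk]
    rw [ArithmeticFunction.isMultiplicative_moebius.map_mul_of_coprime hmn,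
      kronecker_mul D hm hn]
    push_cast
    ring

lemma Ff_mult (r : ℕ) : (Ff r).IsMultiplicative := by
  constructor
  · simp [Ff]
  · intro m n hmn
    rcases eq_or_ne m 0 with rfl | hm
    · simp [Ff]
    rcases eq_or_ne n 0 with rfl | hn
    · simp [Ff]
    simp only [Ff, ArithmeticFunction.coe_mk, if_neg hm, if_neg hn,
      if_neg (mul_ne_zero hm hn)]
    push_cast
    ring

lemma Sf_mult (r : ℕ) : (Sf r).IsMultiplicative :=
  (ArithmeticFunction.isMultiplicative_zeta.natCast).mul (Ff_mult r)

lemma Tf_mult (D : ℤ) (r : ℕ) : (Tf D r).IsMultiplicative :=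
  (Gf_mult D r).mul (Sf_mult r)


lemma Sf_pp {p : ℕ} (hp : p.Prime) (r k : ℕ) :
    Sf r (p ^ k) = ∑ j ∈ Finset.range (k + 1), ((p : ℂ) ^ (2 * r + 1)) ^ j := by
  rw [Sf_apply, Nat.sum_divisors_prime_pow hp]
  refine Finset.sum_congr rfl fun j hj => ?_
  push_cast
  rw [← pow_mul, ← pow_mul, mul_comm j]

lemma Gf_pp {p : ℕ} (hp : p.Prime) (D : ℤ) (r j : ℕ) (hj : 2 ≤ j) :
    Gf D r (p ^ j) = 0 := by
  simp only [Gf, ArithmeticFunction.coe_mk]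
  rw [ArithmeticFunction.moebius_apply_prime_pow hp (by omega), if_neg (by omega)]
  simp

lemma Tf_pp {p : ℕ} (hp : p.Prime) (D : ℤ) (r k : ℕ) (hk : 1 ≤ k) :
    Tf D r (p ^ k) =
      Sf r (p ^ k) - ((kronecker D p : ℤ) : ℂ) * (p : ℂ) ^ r * Sf r (p ^ (k - 1)) := by
  rw [Tf_apply, Nat.sum_divisors_prime_pow hp]
  have hsub : ∀ x ∈ Finset.range (k + 1), x ∉ Finset.range 2 →
      Gf D r (p ^ x) * Sf r (p ^ k / p ^ x) = 0 := by
    intro x _ hx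
    rw [Gf_pp hp D r x (by simp at hx; omega)]
    ring
  rw [← Finset.sum_subset (Finset.range_subset_range.2 (by omega : 2 ≤ k + 1)) hsub]
  rw [Finset.sum_range_succ, Finset.sum_range_one]
  have h0 : Gf D r (p ^ 0) = 1 := by
    simpa using (Gf_mult D r).1
  have h1 : Gf D r (p ^ 1) = -(((kronecker D p : ℤ) : ℂ) * (p : ℂ) ^ r) := by
    simp only [Gf, ArithmeticFunction.coe_mk, pow_one]
    rw [ArithmeticFunction.moebius_apply_prime hp]
    push_cast
    ring
  rw [h0, h1, pow_zero, Nat.div_one, Nat.pow_div hk hp.pos]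
  ring

private lemma geom_rec (X : ℂ) (m : ℕ) :
    (∑ j ∈ Finset.range (m + 3), X ^ j) + X * ∑ j ∈ Finset.range (m + 1), X ^ j
      = (X + 1) * ∑ j ∈ Finset.range (m + 2), X ^ j := by
  induction m with
  | zero => simp [Finset.sum_range_succ]; ring
  | succ n ih =>
    have ha : (∑ j ∈ Finset.range (n + 1 + 3), X ^ j)
        = (∑ j ∈ Finset.range (n + 3), X ^ j) + X ^ (n + 3) := by
      rw [show n + 1 + 3 = (n + 3) + 1 by ring, Finset.sum_range_succ]
    have hb : (∑ j ∈ Finset.range (n + 1 + 1), X ^ j)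
        = (∑ j ∈ Finset.range (n + 1), X ^ j) + X ^ (n + 1) := by
      rw [Finset.sum_range_succ]
    have hc : (∑ j ∈ Finset.range (n + 1 + 2), X ^ j)
        = (∑ j ∈ Finset.range (n + 2), X ^ j) + X ^ (n + 2) := by
      rw [show n + 1 + 2 = (n + 2) + 1 by ring, Finset.sum_range_succ]
    linear_combination ih + ha + X * hb - (X + 1) * hc

lemma Tf_pp_rec {p : ℕ} (hp : p.Prime) (D : ℤ) (r k : ℕ) (hk : 1 ≤ k) :
    Tf D r (p ^ (k + 1)) + ((p : ℂ) ^ (2 * r + 1)) * Tf D r (p ^ (k - 1))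
      = (((p : ℂ) ^ (2 * r + 1)) + 1) * Tf D r (p ^ k) := by
  set X : ℂ := (p : ℂ) ^ (2 * r + 1) with hX
  set cP : ℂ := ((kronecker D p : ℤ) : ℂ) * (p : ℂ) ^ r with hcP
  obtain ⟨t, rfl⟩ : ∃ t, k = t + 1 := ⟨k - 1, by omega⟩
  rw [Nat.add_sub_cancel]
  rcases t with _ | t'
  · show Tf D r (p ^ 2) + X * Tf D r (p ^ 0) = (X + 1) * Tf D r (p ^ 1)
    rw [pow_zero, (Tf_mult D r).1, Tf_pp hp D r 2 (by norm_num), Tf_pp hp D r 1 (by norm_num)]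
    rw [show (2 : ℕ) - 1 = 1 from rfl, show (1 : ℕ) - 1 = 0 from rfl]
    rw [Sf_pp hp r 2, Sf_pp hp r 1, Sf_pp hp r 0]
    simp [Finset.sum_range_succ]
    ring
  · show Tf D r (p ^ (t' + 3)) + X * Tf D r (p ^ (t' + 1)) = (X + 1) * Tf D r (p ^ (t' + 2))
    rw [Tf_pp hp D r (t' + 3) (by omega), Tf_pp hp D r (t' + 1) (by omega),
      Tf_pp hp D r (t' + 2) (by omega)]
    rw [show t' + 3 - 1 = t' + 2 by omega, show t' + 1 - 1 = t' by omega,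
      show t' + 2 - 1 = t' + 1 by omega]
    rw [Sf_pp hp r (t' + 3), Sf_pp hp r (t' + 2), Sf_pp hp r (t' + 1), Sf_pp hp r t']
    rw [show t' + 3 + 1 = t' + 4 by ring, show t' + 2 + 1 = t' + 3 by ring,
      show t' + 1 + 1 = t' + 2 by ring]
    have g1 := geom_rec X (t' + 1)
    have g2 := geom_rec X t'
    rw [show t' + 1 + 3 = t' + 4 by ring, show t' + 1 + 2 = t' + 3 by ring,
      show t' + 1 + 1 = t' + 2 by ring] at g1
    linear_combination g1 - cP * g2

lemma Tf_key {p : ℕ} (hp : p.Prime) (D : ℤ) (r : ℕ) (v : ℕ) (hv : 0 < v) :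
    Tf D r (v * p)
        + (if p ∣ v then 0 else ((kronecker D p : ℤ) : ℂ)) * (p : ℂ) ^ r * Tf D r v
        + (if p ∣ v then ((p : ℂ) ^ (2 * r + 1)) * Tf D r (v / p) else 0)
      = (((p : ℂ) ^ (2 * r + 1)) + 1) * Tf D r v := by
  set X : ℂ := (p : ℂ) ^ (2 * r + 1) with hX
  set k : ℕ := v.factorization p with hk
  set u : ℕ := v / p ^ k with hu
  have hvu : v = p ^ k * u := (Nat.ordProj_mul_ordCompl_eq_self v p).symm
  have hcop : p.Coprime u := Nat.coprime_ordCompl hp hv.ne'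
  have hT := Tf_mult D r
  by_cases hpv : p ∣ v
  · have hk1 : 1 ≤ k := hp.factorization_pos_of_dvd hv.ne' hpv
    rw [if_pos hpv, if_pos hpv]
    have h1 : v * p = p ^ (k + 1) * u := by
      rw [hvu]; ring
    have h2 : v / p = p ^ (k - 1) * u := by
      rw [hvu, show p ^ k = p * p ^ (k - 1) by
        rw [← pow_succ']; congr 1; omega]
      rw [mul_assoc, Nat.mul_div_cancel_left _ hp.pos]
    rw [h1, h2, hvu]
    rw [hT.map_mul_of_coprime ((Nat.Coprime.pow_left _ hcop)),
      hT.map_mul_of_coprime ((Nat.Coprime.pow_left _ hcop)),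
      hT.map_mul_of_coprime ((Nat.Coprime.pow_left _ hcop))]
    have := Tf_pp_rec hp D r k hk1
    linear_combination (Tf D r u) * this
  · have hk0 : k = 0 := Nat.factorization_eq_zero_of_not_dvd hpv
    rw [if_neg hpv, if_neg hpv]
    have hcv : v.Coprime p := (Nat.Prime.coprime_iff_not_dvd hp).mpr hpv |>.symm
    rw [hT.map_mul_of_coprime hcv]
    have hTp := Tf_pp hp D r 1 le_rfl
    rw [show (1 : ℕ) - 1 = 0 from rfl, Sf_pp hp r 1, Sf_pp hp r 0] at hTp
    simp only [pow_one, Finset.sum_range_succ, Finset.sum_range_zero] at hTp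
    rw [hTp]
    ring

private lemma legendre_bridge {p : ℕ} [hp : Fact p.Prime] (hodd : Odd p)
    (r N : ℕ) (D : ℤ) (v : ℕ) (hv : 0 < v)
    (hdv : (-1 : ℤ) ^ r * (N : ℤ) = D * (v : ℤ) ^ 2) :
    (legendreSym p ((-1) ^ r * (N : ℤ)) : ℤ)
      = if p ∣ v then 0 else kronecker D p := by
  by_cases hpv : p ∣ v
  · rw [if_pos hpv, legendreSym.eq_zero_iff, hdv]
    push_cast
    have hv0 : ((v : ℕ) : ZMod p) = 0 := (ZMod.natCast_eq_zero_iff v p).mpr hpv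
    rw [hv0]
    ring
  · rw [if_neg hpv, hdv, legendreSym.mul, show ((v : ℤ))^2 = (v : ℤ) * (v : ℤ) by ring,
      legendreSym.mul]
    have hvz : ((v : ℤ) : ZMod p) ≠ 0 := by
      intro h
      exact hpv ((ZMod.natCast_eq_zero_iff v p).mp (by exact_mod_cast h))
    have hsq : legendreSym p (v : ℤ) * legendreSym p (v : ℤ) = 1 := by
      have := legendreSym.sq_one p hvz
      nlinarith [this]
    rw [hsq, mul_one]
    have h2 : ¬ (2 ∣ p) := by
      rcases hodd with ⟨t, ht⟩
      omega
    have hval : padicValNat 2 p = 0 := padicValNat.eq_zero_of_not_dvd h2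
    unfold kronecker
    rw [hval]
    simp [jacobiSym.legendreSym.to_jacobiSym]

private lemma dvd_bridge {p : ℕ} (hp : p.Prime) (hodd : Odd p) (r N : ℕ) (hN : 0 < N)
    (D : ℤ) (v : ℕ) (hD : IsFundDisc D)
    (hdv : (-1 : ℤ) ^ r * (N : ℤ) = D * (v : ℤ) ^ 2) :
    p ^ 2 ∣ N ↔ p ∣ v := by
  have hNeq : (N : ℤ) = ((-1) ^ r * D) * (v : ℤ) ^ 2 := by
    have hsq : ((-1 : ℤ) ^ r) * ((-1 : ℤ) ^ r) = 1 := by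
      rw [← pow_add]
      exact Even.neg_one_pow ⟨r, by ring⟩
    calc (N : ℤ) = ((-1 : ℤ) ^ r * (-1 : ℤ) ^ r) * (N : ℤ) := by rw [hsq]; ring
    _ = (-1 : ℤ) ^ r * (D * (v : ℤ) ^ 2) := by rw [← hdv]; ring
    _ = ((-1) ^ r * D) * (v : ℤ) ^ 2 := by ring
  constructor
  · intro hdvd
    by_contra hpv
    have hcop : IsCoprime (p : ℤ) (v : ℤ) :=
      Nat.Coprime.isCoprime ((Nat.Prime.coprime_iff_not_dvd hp).mpr hpv)
    have hdvd' : ((p : ℤ)) ^ 2 ∣ D * (v : ℤ) ^ 2 := by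
      rw [← hdv]
      have hint : ((p : ℤ)) ^ 2 ∣ (N : ℤ) := by
        have := Int.natCast_dvd_natCast.mpr hdvd
        push_cast at this
        exact this
      exact Dvd.dvd.mul_left hint _
    have hpD : ((p : ℤ)) ^ 2 ∣ D :=
      (IsCoprime.pow hcop).dvd_of_dvd_mul_right hdvd'
    have hp2 : (2 : ℤ) ≤ (p : ℤ) := by exact_mod_cast hp.two_le
    have hnotunit : ¬ IsUnit ((p : ℤ)) := by
      rw [Int.isUnit_iff]; omega
    rcases hD with ⟨_, hsf⟩ | ⟨h4, hsf, _⟩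
    · exact hnotunit (hsf (p : ℤ) (by rwa [← sq]))
    · have hD4 : D = 4 * (D / 4) := (Int.mul_ediv_add_emod D 4) ▸ by omega
      have hcop4 : IsCoprime ((p : ℤ) ^ 2) (4 : ℤ) := by
        have h2p : ¬ (2 ∣ p) := by
          rcases hodd with ⟨t, ht⟩
          omega
        have : IsCoprime ((p : ℤ)) (2 : ℤ) :=
          Nat.Coprime.isCoprime (((Nat.prime_two.coprime_iff_not_dvd).mpr h2p).symm)
        have h4eq : (4 : ℤ) = 2 ^ 2 := by norm_num
        rw [h4eq]
        exact IsCoprime.pow this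
      have hpD4 : ((p : ℤ)) ^ 2 ∣ (D / 4) := by
        refine hcop4.dvd_of_dvd_mul_left ?_
        rwa [← hD4]
      exact hnotunit (hsf (p : ℤ) (by rwa [← sq]))
  · intro hpv
    obtain ⟨t, rfl⟩ := hpv
    have : (N : ℤ) = ((p : ℤ)) ^ 2 * (((-1) ^ r * D) * (t : ℤ) ^ 2) := by
      rw [hNeq]; push_cast; ring
    have : ((p ^ 2 : ℕ) : ℤ) ∣ (N : ℤ) := ⟨((-1) ^ r * D) * (t : ℤ) ^ 2, by push_cast; exact this⟩
    exact_mod_cast this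

private lemma TT_eq (D : ℤ) (r v : ℕ) :
    TT (fun a => ((kronecker D a : ℤ) : ℂ)) ((r : ℂ) + 1) v = Tf D r v := by
  rw [Tf_apply, TT]
  refine Finset.sum_congr rfl fun a ha => ?_
  have h1 : ((r : ℂ) + 1 - 1) = ((r : ℕ) : ℂ) := by push_cast; ring
  have h2 : sigmaC (2 * ((r : ℂ) + 1) - 1) (v / a) = Sf r (v / a) := by
    rw [Sf_apply, sigmaC]
    refine Finset.sum_congr rfl fun d hd => ?_
    rw [show (2 * ((r : ℂ) + 1) - 1) = ((2 * r + 1 : ℕ) : ℂ) by push_cast; ring,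
      Complex.cpow_natCast]
  rw [h1, Complex.cpow_natCast, h2]
  simp only [Gf, ArithmeticFunction.coe_mk]

/-- the holomorphic coefficients
`c(M) = L(1+r, χ_D) T_{r+1}^{χ_D}(v) / v^(2r+1)` (where `(-1)^r M = D v²`) satisfy the
weight `-r + 1/2` Hecke relation at an odd prime `p` with eigenvalue `1 + p^(-2r-1)`. -/
theorem coeff_hecke_relation (r : ℕ) (hr : 1 ≤ r) (p : ℕ) [hp : Fact p.Prime]
    (hodd : Odd p) (N : ℕ) (hN : 0 < N)
    (hmod : ((-1 : ℤ) ^ r * (N : ℤ)) % 4 = 0 ∨ ((-1 : ℤ) ^ r * (N : ℤ)) % 4 = 1)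
    (c : ℕ → ℂ)
    (hc : ∀ M : ℕ, 0 < M → ∀ D : ℤ, ∀ v : ℕ, IsFundDisc D → 0 < v →
        (-1 : ℤ) ^ r * (M : ℤ) = D * (v : ℤ) ^ 2 →
        c M = LKron D ((r : ℂ) + 1) * TT (fun a => ((kronecker D a : ℤ) : ℂ)) ((r : ℂ) + 1) v /
          ((v : ℂ)) ^ (2 * r + 1)) :
    c (p ^ 2 * N) + ((legendreSym p ((-1) ^ r * (N : ℤ)) : ℤ) : ℂ) * ((p : ℂ) ^ (r + 1))⁻¹ * c N
        + ((p : ℂ) ^ (2 * r + 1))⁻¹ * (if p ^ 2 ∣ N then c (N / p ^ 2) else 0)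
      = (1 + ((p : ℂ) ^ (2 * r + 1))⁻¹) * c N := by
  have hp' := hp.out
  have hn0 : ((-1 : ℤ) ^ r * (N : ℤ)) ≠ 0 :=
    mul_ne_zero (pow_ne_zero _ (by norm_num)) (Int.natCast_ne_zero.mpr hN.ne')
  obtain ⟨D, v, hD, hv, hdv⟩ := exists_fund_disc _ hn0 hmod
  have hvC : ((v : ℕ) : ℂ) ≠ 0 := Nat.cast_ne_zero.mpr hv.ne'
  have hpC : ((p : ℕ) : ℂ) ≠ 0 := Nat.cast_ne_zero.mpr hp'.pos.ne'
  set L : ℂ := LKron D ((r : ℂ) + 1) with hL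
  have hcN : c N = L * Tf D r v / ((v : ℕ) : ℂ) ^ (2 * r + 1) := by
    rw [hc N hN D v hD hv hdv, TT_eq]
  have hcP : c (p ^ 2 * N) = L * Tf D r (v * p) / (((v * p : ℕ) : ℂ)) ^ (2 * r + 1) := by
    rw [hc (p ^ 2 * N) (Nat.mul_pos (pow_pos hp'.pos 2) hN) D (v * p) hD (Nat.mul_pos hv hp'.pos)
      (by push_cast; linear_combination (p : ℤ) ^ 2 * hdv), TT_eq]
  have hleg : ((legendreSym p ((-1) ^ r * (N : ℤ)) : ℤ) : ℂ)
      = if p ∣ v then 0 else ((kronecker D p : ℤ) : ℂ) := by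
    rw [legendre_bridge hodd r N D v hv hdv]
    split <;> simp
  have hdb : p ^ 2 ∣ N ↔ p ∣ v := dvd_bridge hp' hodd r N hN D v hD hdv
  have key := Tf_key hp' D r v hv
  by_cases hpv : p ∣ v
  · rw [if_pos hpv, if_pos hpv] at key
    rw [if_pos hpv] at hleg
    rw [if_pos (hdb.mpr hpv)]
    obtain ⟨v', rfl⟩ := hpv
    have hv' : 0 < v' := Nat.pos_of_ne_zero fun h => by subst h; simp at hv
    obtain ⟨N', hN'⟩ := hdb.mpr ⟨v', rfl⟩
    have hNdiv : N / p ^ 2 = N' := by rw [hN']; exact Nat.mul_div_cancel_left _ (pow_pos hp'.pos 2)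
    have hN'pos : 0 < N' := by
      rcases Nat.eq_zero_or_pos N' with rfl | h
      · omega
      · exact h
    have hdv' : (-1 : ℤ) ^ r * (N' : ℤ) = D * ((v' : ℕ) : ℤ) ^ 2 := by
      have hp2 : ((p : ℤ)) ^ 2 ≠ 0 := pow_ne_zero _ (Int.natCast_ne_zero.mpr hp'.pos.ne')
      have : ((p : ℤ)) ^ 2 * ((-1 : ℤ) ^ r * (N' : ℤ))
          = ((p : ℤ)) ^ 2 * (D * ((v' : ℕ) : ℤ) ^ 2) := by
        have hdv2 := hdv
        rw [hN'] at hdv2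
        push_cast at hdv2 ⊢
        linear_combination hdv2
      exact mul_left_cancel₀ hp2 this
    have hvdiv : p * v' / p = v' := Nat.mul_div_cancel_left _ hp'.pos
    have hcQ : c (N / p ^ 2) = L * Tf D r v' / (((v' : ℕ) : ℂ)) ^ (2 * r + 1) := by
      rw [hNdiv, hc N' hN'pos D v' hD hv' hdv', TT_eq]
    rw [hvdiv] at key
    have hv'C : ((v' : ℕ) : ℂ) ≠ 0 := Nat.cast_ne_zero.mpr hv'.ne'
    rw [hcN, hcP, hcQ, hleg]
    push_cast
    field_simp
    ring_nf
    ring_nf at key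
    linear_combination (L * (p : ℂ) ^ 3 * (p : ℂ) ^ (r * 5) * (v' : ℂ) ^ 2 * (v' : ℂ) ^ (r * 4)) * key
  · rw [if_neg hpv, if_neg hpv] at key
    rw [if_neg hpv] at hleg
    rw [if_neg (fun h => hpv (hdb.mp h))]
    rw [hcN, hcP, hleg]
    push_cast
    field_simp
    ring_nf
    ring_nf at key
    linear_combination (L * (p : ℂ) ^ 2 * (p : ℂ) ^ (r * 3) * (v : ℂ) * (v : ℂ) ^ (r * 2)) * key
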